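/- (Proposition 3, finite-horizon bound) For the PIE iterates x, for every N ∈ ℕ, ‖x N − x 0‖ ≤ ((1 − (√α₀)^N)/(1 − √α₀)) · K. -/

import Mathlib

open Finset in
/-- Proposition 3, finite-horizon bound for the PIE iterates. -/
theorem pie_prop3_finite {V : Type*} [NormedAddCommGroup V] [NormedSpace ℝ V]
    (α₀ lam : ℝ) (hα₀ : 0 < α₀) (hα₀' : α₀ < 1) (hlam : 0 ≤ lam)
    (x₀ : V) (e : ℕ → V) (x : ℕ → V)
    (hx : ∀ N : ℕ, x N = (Real.sqrt α₀) ^ N • x₀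
        + lam • ∑ i ∈ Finset.Icc 1 N, (Real.sqrt α₀) ^ i • e i)
    (C₁ C₂ : ℝ) (hC₁ : 0 ≤ C₁) (hC₂ : 0 ≤ C₂)
    (hx₀ : ‖x₀‖ ≤ C₁) (he : ∀ n : ℕ, 1 ≤ n → ‖e n‖ ≤ C₂)
    (K : ℝ) (hK : K = (1 / Real.sqrt α₀ - 1) * C₁ + lam * C₂)
    (N : ℕ) :
    ‖x N - x 0‖ ≤ (1 - (Real.sqrt α₀) ^ N) / (1 - Real.sqrt α₀) * K := by
  set s := Real.sqrt α₀ with hs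
  have hs0 : 0 < s := Real.sqrt_pos.mpr hα₀
  have hs1 : s < 1 := by
    rw [hs, show (1:ℝ) = Real.sqrt 1 by simp]
    exact Real.sqrt_lt_sqrt hα₀.le hα₀'
  have hsN : s ^ N ≤ 1 := pow_le_one₀ hs0.le hs1.le
  have hsN0 : 0 ≤ s ^ N := pow_nonneg hs0.le N
  have hx0 : x 0 = x₀ := by simp [hx 0]
  have hdiff : x N - x 0 = (s ^ N - 1) • x₀ + lam • ∑ i ∈ Finset.Icc 1 N, s ^ i • e i := by
    rw [hx N, hx0, sub_smul, one_smul]; abel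
  have hsum : ∑ i ∈ Finset.Icc 1 N, s ^ i = s * (1 - s ^ N) / (1 - s) := by
    have h1 : Finset.Icc 1 N = Finset.Ico 1 (N + 1) := by
      ext k; simp [Nat.lt_succ_iff]
    have h2 : ∑ i ∈ Finset.Icc 1 N, s ^ i = s * ∑ i ∈ Finset.range N, s ^ i := by
      rw [h1, Finset.sum_Ico_eq_sum_range, Finset.mul_sum]
      simp [pow_succ, pow_add, mul_comm]
    have hne : s ≠ 1 := ne_of_lt hs1
    rw [h2, geom_sum_eq hne, mul_div_assoc', div_eq_div_iff (by linarith) (by linarith)]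
    ring
  have hbound : ‖x N - x 0‖ ≤ (1 - s ^ N) * C₁ + lam * (C₂ * (s * (1 - s ^ N) / (1 - s))) := by
    rw [hdiff]
    refine (norm_add_le _ _).trans ?_
    gcongr
    · rw [norm_smul, Real.norm_eq_abs, abs_of_nonpos (by linarith)]
      have : -(s ^ N - 1) = 1 - s ^ N := by ring
      rw [this]
      exact mul_le_mul_of_nonneg_left hx₀ (by linarith)
    · rw [norm_smul, Real.norm_eq_abs, abs_of_nonneg hlam]
      refine mul_le_mul_of_nonneg_left ?_ hlam
      calc ‖∑ i ∈ Finset.Icc 1 N, s ^ i • e i‖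
          ≤ ∑ i ∈ Finset.Icc 1 N, ‖s ^ i • e i‖ := norm_sum_le _ _
        _ ≤ ∑ i ∈ Finset.Icc 1 N, s ^ i * C₂ := by
            refine Finset.sum_le_sum fun i hi => ?_
            rw [norm_smul, Real.norm_eq_abs, abs_of_nonneg (pow_nonneg hs0.le i)]
            exact mul_le_mul_of_nonneg_left (he i (Finset.mem_Icc.mp hi).1)
              (pow_nonneg hs0.le i)
        _ = C₂ * (s * (1 - s ^ N) / (1 - s)) := by
            rw [← Finset.sum_mul, hsum]; ring
  refine hbound.trans ?_
  rw [hK]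
  have h1s : (0:ℝ) < 1 - s := by linarith
  rw [div_mul_eq_mul_div, le_div_iff₀ h1s]
  have key : ((1 - s ^ N) * C₁ + lam * (C₂ * (s * (1 - s ^ N) / (1 - s)))) * (1 - s)
      = (1 - s ^ N) * (C₁ * (1 - s) + lam * C₂ * s) := by
    field_simp
  rw [key]
  have hK' : (1 - s ^ N) * ((1 / s - 1) * C₁ + lam * C₂)
      ≥ (1 - s ^ N) * (C₁ * (1 - s) + lam * C₂ * s) := by
    refine mul_le_mul_of_nonneg_left ?_ (by linarith)
    have h1 : C₁ * (1 - s) ≤ (1 / s - 1) * C₁ := by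
      have : (1 / s - 1) - (1 - s) = (1 - s)^2 / s := by field_simp
      nlinarith [sq_nonneg (1 - s), mul_nonneg hC₁ (div_nonneg (sq_nonneg (1-s)) hs0.le)]
    have h2 : lam * C₂ * s ≤ lam * C₂ := by
      nlinarith [mul_nonneg hlam hC₂]
    linarith
  linarith
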